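/- Let L = {ℓ₁ < ℓ₂ < ... < ℓ_s} be a set of s positive integers and let F ⊆ 2^[n] be an L-intersecting Sperner family in which every member has size at most M. If F is trivially ℓ₁-intersecting (there is a set A of size ℓ₁ contained in every member of F), then |F| ≤ ∑_{i=0}^{s} C(n-2, i). -/

import Mathlib

open Finset Submodule

namespace Stmt3Aux

variable {n : ℕ}

/-- The ambient space of functions from finsets to ℚ. -/
abbrev V (n : ℕ) := Finset (Fin n) → ℚ

/-- Monomial function: indicator that `T ⊆ S`. -/
def chi (T : Finset (Fin n)) : V n := fun S => if T ⊆ S then 1 else 0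

/-- Monomials of degree at most `k` supported in `Y`. -/
def MSet (Y : Finset (Fin n)) (k : ℕ) : Set (V n) :=
  {f | ∃ T : Finset (Fin n), T ⊆ Y ∧ T.card ≤ k ∧ f = chi T}

lemma MSet_mono {Y : Finset (Fin n)} {k l : ℕ} (h : k ≤ l) : MSet Y k ⊆ MSet Y l := by
  rintro f ⟨T, hTY, hTk, rfl⟩
  exact ⟨T, hTY, hTk.trans h, rfl⟩

lemma factor_mul_chi (C T : Finset (Fin n)) (e : ℚ) :
    (fun S => (((S ∩ C).card : ℚ) + e)) * chi T
      = e • chi T + ∑ b ∈ C, chi (insert b T) := by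
  funext S
  simp only [Pi.mul_apply, Pi.add_apply, Pi.smul_apply, Finset.sum_apply, chi, smul_eq_mul]
  by_cases hTS : T ⊆ S
  · rw [if_pos hTS]
    have hsum : ∑ b ∈ C, (if insert b T ⊆ S then (1:ℚ) else 0)
        = ∑ b ∈ C, (if b ∈ S then (1:ℚ) else 0) := by
      refine Finset.sum_congr rfl fun b _ => ?_
      simp [Finset.insert_subset_iff, hTS]
    rw [hsum, Finset.sum_boole, Finset.filter_mem_eq_inter, Finset.inter_comm]
    ring
  · rw [if_neg hTS]
    have hz : ∀ b ∈ C, (if insert b T ⊆ S then (1:ℚ) else 0) = 0 := by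
      intro b _
      have : ¬ insert b T ⊆ S := fun hsub => hTS ((Finset.subset_insert b T).trans hsub)
      simp [this]
    rw [Finset.sum_eq_zero hz]
    ring

lemma mul_mem_span {Y C : Finset (Fin n)} (hCY : C ⊆ Y) (e : ℚ) (k : ℕ)
    {g : V n} (hg : g ∈ span ℚ (MSet Y k)) :
    (fun S => (((S ∩ C).card : ℚ) + e) * g S) ∈ span ℚ (MSet Y (k+1)) := by
  set fac : V n := fun S => (((S ∩ C).card : ℚ) + e) with hfac
  have hmap : (span ℚ (MSet Y k)).map (LinearMap.mulLeft ℚ fac) ≤ span ℚ (MSet Y (k+1)) := by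
    rw [Submodule.map_span, Submodule.span_le]
    rintro f ⟨f', ⟨T, hTY, hTk, rfl⟩, rfl⟩
    have hexp : LinearMap.mulLeft ℚ fac (chi T)
        = e • chi T + ∑ b ∈ C, chi (insert b T) := by
      rw [LinearMap.mulLeft_apply]
      exact factor_mul_chi C T e
    rw [SetLike.mem_coe, hexp]
    refine add_mem (Submodule.smul_mem _ _ (subset_span ⟨T, hTY, hTk.trans (Nat.le_succ k), rfl⟩))
      (Submodule.sum_mem _ fun b hb => subset_span ?_)
    exact ⟨insert b T, Finset.insert_subset (hCY hb) hTY,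
      (Finset.card_insert_le _ _).trans (Nat.succ_le_succ hTk), rfl⟩
  have hmem : LinearMap.mulLeft ℚ fac g ∈ span ℚ (MSet Y (k+1)) :=
    hmap (Submodule.mem_map_of_mem hg)
  have heq : (fun S => (((S ∩ C).card : ℚ) + e) * g S) = LinearMap.mulLeft ℚ fac g := rfl
  rw [heq]; exact hmem

lemma prod_mem_span {Y C : Finset (Fin n)} (hCY : C ⊆ Y) (e0 : ℚ) (Lb : Finset ℕ) :
    (fun S => ∏ ℓ ∈ Lb, (((S ∩ C).card : ℚ) + (e0 - (ℓ:ℚ)))) ∈ span ℚ (MSet Y Lb.card) := by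
  classical
  induction Lb using Finset.induction_on with
  | empty =>
      have h1 : (fun _ : Finset (Fin n) => (1:ℚ)) = chi (∅ : Finset (Fin n)) := by
        funext S; simp [chi]
      simp only [Finset.prod_empty, Finset.card_empty]
      rw [h1]
      exact subset_span ⟨∅, Finset.empty_subset _, le_rfl, rfl⟩
  | insert a Lb' ha ih =>
      have hprod : (fun S => ∏ ℓ ∈ insert a Lb', (((S ∩ C).card : ℚ) + (e0 - (ℓ:ℚ))))
          = fun S => (((S ∩ C).card : ℚ) + (e0 - (a:ℚ)))
              * ∏ ℓ ∈ Lb', (((S ∩ C).card : ℚ) + (e0 - (ℓ:ℚ))) := by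
        funext S; rw [Finset.prod_insert ha]
      rw [hprod, Finset.card_insert_of_notMem ha]
      exact mul_mem_span hCY (e0 - (a:ℚ)) Lb'.card ih

/-- The key evaluation functions. -/
def gfun (z : Fin n) (L' : Finset ℕ) (B : Finset (Fin n)) : V n :=
  fun S => ∏ ℓ ∈ L'.filter (fun ℓ => ℓ < B.card),
    (((S ∩ B.erase z).card : ℚ) + ((if z ∈ B then (1:ℚ) else 0) - (ℓ:ℚ)))

lemma gfun_card_eq {z : Fin n} {B B' : Finset (Fin n)} (h : z ∈ B' ∨ z ∉ B) :
    ((B' ∩ B.erase z).card : ℚ) + (if z ∈ B then (1:ℚ) else 0) = ((B ∩ B').card : ℚ) := by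
  by_cases hzB : z ∈ B
  · have hzB' : z ∈ B' := h.resolve_right (fun hc => hc hzB)
    rw [if_pos hzB, Finset.inter_erase]
    have hz : z ∈ B' ∩ B := Finset.mem_inter.2 ⟨hzB', hzB⟩
    have := Finset.card_erase_add_one hz
    have hcast : (((B' ∩ B).erase z).card : ℚ) + 1 = ((B' ∩ B).card : ℚ) := by
      exact_mod_cast congrArg (Nat.cast (R := ℚ)) this
    rw [hcast, Finset.inter_comm]
  · rw [if_neg hzB, Finset.erase_eq_of_notMem hzB, add_zero, Finset.inter_comm]

lemma gfun_eval {z : Fin n} {L' : Finset ℕ} {B B' : Finset (Fin n)} (h : z ∈ B' ∨ z ∉ B) :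
    gfun z L' B B' = ∏ ℓ ∈ L'.filter (fun ℓ => ℓ < B.card), (((B ∩ B').card : ℚ) - (ℓ:ℚ)) := by
  unfold gfun
  refine Finset.prod_congr rfl fun ℓ _ => ?_
  rw [add_sub, gfun_card_eq h]

lemma gfun_diag_ne_zero (z : Fin n) (L' : Finset ℕ) (B : Finset (Fin n)) :
    gfun z L' B B ≠ 0 := by
  have h : gfun z L' B B = ∏ ℓ ∈ L'.filter (fun ℓ => ℓ < B.card), ((B.card : ℚ) - (ℓ:ℚ)) := by
    rw [gfun_eval (em (z ∈ B)), Finset.inter_self]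
  rw [h]
  rw [Finset.prod_ne_zero_iff]
  intro ℓ hℓ
  have hlt : ℓ < B.card := (Finset.mem_filter.1 hℓ).2
  have : (ℓ:ℚ) < (B.card : ℚ) := by exact_mod_cast hlt
  exact sub_ne_zero.2 (ne_of_gt this)

lemma gfun_offdiag {z : Fin n} {L' : Finset ℕ} {B B' : Finset (Fin n)}
    (hne : B ≠ B') (hsub : ¬ B ⊆ B') (hintm : (B ∩ B').card ∈ L')
    (h : z ∈ B' ∨ z ∉ B) :
    gfun z L' B B' = 0 := by
  rw [gfun_eval h]
  have hss : B ∩ B' ⊂ B := by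
    refine Finset.ssubset_iff_subset_ne.2 ⟨Finset.inter_subset_left, fun hc => ?_⟩
    exact hsub (by rw [← Finset.inter_eq_left]; exact hc)
  have hlt : (B ∩ B').card < B.card := Finset.card_lt_card hss
  refine Finset.prod_eq_zero (Finset.mem_filter.2 ⟨hintm, hlt⟩) ?_
  exact sub_self _

theorem key (X : Finset (Fin n)) (z : Fin n) (hzX : z ∈ X) (L' : Finset ℕ)
    (G : Finset (Finset (Fin n))) (hGX : ∀ B ∈ G, B ⊆ X)
    (hanti : ∀ B ∈ G, ∀ B' ∈ G, B ≠ B' → ¬ B ⊆ B')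
    (hintG : ∀ B ∈ G, ∀ B' ∈ G, B ≠ B' → (B ∩ B').card ∈ L') :
    G.card ≤ ∑ i ∈ Finset.range (L'.card + 1), (X.card - 1).choose i := by
  classical
  set Y : Finset (Fin n) := X.erase z with hY
  set s' : ℕ := L'.card with hs'
  set 𝒯 : Finset (Finset (Fin n)) := Y.powerset.filter (fun T => T.card ≤ s') with h𝒯
  set Φ : Finset (V n) := 𝒯.image chi with hΦ
  have hMs : MSet Y s' = (Φ : Set (V n)) := by
    ext f
    constructor
    · rintro ⟨T, hTY, hTk, rfl⟩
      exact Finset.mem_coe.2 (Finset.mem_image_of_mem chi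
        (Finset.mem_filter.2 ⟨Finset.mem_powerset.2 hTY, hTk⟩))
    · intro hf
      rcases Finset.mem_image.1 (Finset.mem_coe.1 hf) with ⟨T, hT, rfl⟩
      rcases Finset.mem_filter.1 hT with ⟨hTY, hTk⟩
      exact ⟨T, Finset.mem_powerset.1 hTY, hTk, rfl⟩
  set W : Submodule ℚ (V n) := span ℚ ((Φ : Set (V n))) with hW
  haveI : FiniteDimensional ℚ W := FiniteDimensional.span_of_finite ℚ (Φ.finite_toSet)
  -- membership of the gfun's in W
  have hmemW : ∀ B ∈ G, gfun z L' B ∈ W := by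
    intro B hB
    have hCY : B.erase z ⊆ Y := Finset.erase_subset_erase z (hGX B hB)
    have h1 := prod_mem_span (n := n) hCY (if z ∈ B then (1:ℚ) else 0)
      (L'.filter (fun ℓ => ℓ < B.card))
    have h2 : (L'.filter (fun ℓ => ℓ < B.card)).card ≤ s' := Finset.card_filter_le _ _
    have h3 : span ℚ (MSet Y (L'.filter (fun ℓ => ℓ < B.card)).card) ≤ span ℚ (MSet Y s') :=
      span_mono (MSet_mono h2)
    rw [hW, ← hMs]
    exact h3 h1
  -- linear independence of the gfun's, over the ambient space
  have hliV : LinearIndependent ℚ (fun B : {B // B ∈ G} => gfun z L' B.1) := by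
    rw [Fintype.linearIndependent_iff]
    intro g hsum
    have heval : ∀ S : Finset (Fin n), ∑ B : {B // B ∈ G}, g B * gfun z L' B.1 S = 0 := by
      intro S
      have := congrFun hsum S
      simpa [Finset.sum_apply, smul_eq_mul] using this
    have hterm : ∀ (B B0 : {B // B ∈ G}), B ≠ B0 → (z ∈ B0.1 ∨ z ∉ B.1) →
        gfun z L' B.1 B0.1 = 0 := by
      intro B B0 hne h
      have hBne : B.1 ≠ B0.1 := fun hc => hne (Subtype.ext hc)
      exact gfun_offdiag hBne (hanti B.1 B.2 B0.1 B0.2 hBne)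
        (hintG B.1 B.2 B0.1 B0.2 hBne) h
    have claim1 : ∀ B0 : {B // B ∈ G}, z ∈ B0.1 → g B0 = 0 := by
      intro B0 hz0
      have h0 := heval B0.1
      rw [Finset.sum_eq_single B0 (fun B _ hBne => by
            rw [hterm B B0 hBne (Or.inl hz0), mul_zero])
          (fun h => absurd (Finset.mem_univ B0) h)] at h0
      exact (mul_eq_zero.1 h0).resolve_right (gfun_diag_ne_zero z L' B0.1)
    have claim2 : ∀ B0 : {B // B ∈ G}, z ∉ B0.1 → g B0 = 0 := by
      intro B0 hz0
      have h0 := heval B0.1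
      rw [Finset.sum_eq_single B0 (fun B _ hBne => by
            by_cases hzB : z ∈ B.1
            · rw [claim1 B hzB, zero_mul]
            · rw [hterm B B0 hBne (Or.inr hzB), mul_zero])
          (fun h => absurd (Finset.mem_univ B0) h)] at h0
      exact (mul_eq_zero.1 h0).resolve_right (gfun_diag_ne_zero z L' B0.1)
    intro B0
    by_cases hz0 : z ∈ B0.1
    · exact claim1 B0 hz0
    · exact claim2 B0 hz0
  -- transfer independence into W
  have hliW : LinearIndependent ℚ
      (fun B : {B // B ∈ G} => (⟨gfun z L' B.1, hmemW B.1 B.2⟩ : W)) := by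
    apply LinearIndependent.of_comp (W.subtype)
    exact hliV
  have hcard1 : Fintype.card {B // B ∈ G} ≤ Module.finrank ℚ W :=
    hliW.fintype_card_le_finrank
  have hcard2 : Module.finrank ℚ W ≤ Φ.card := by
    have := finrank_span_finset_le_card (R := ℚ) Φ
    simpa [Set.finrank, hW] using this
  have hcard3 : Φ.card ≤ 𝒯.card := Finset.card_image_le
  have hcount : 𝒯.card = ∑ i ∈ Finset.range (s' + 1), (Y.card).choose i := by
    have hsplit : 𝒯 = (Finset.range (s' + 1)).biUnion (fun i => Y.powersetCard i) := by
      ext T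
      simp only [h𝒯, Finset.mem_filter, Finset.mem_powerset, Finset.mem_biUnion,
        Finset.mem_range, Finset.mem_powersetCard, Nat.lt_succ_iff]
      constructor
      · rintro ⟨hTY, hTk⟩; exact ⟨T.card, hTk, hTY, rfl⟩
      · rintro ⟨i, hi, hTY, rfl⟩; exact ⟨hTY, hi⟩
    rw [hsplit, Finset.card_biUnion]
    · refine Finset.sum_congr rfl fun i _ => ?_
      rw [Finset.card_powersetCard]
    · intro i _ j _ hij
      rw [Function.onFun, Finset.disjoint_left]
      intro T hTi hTj
      rw [Finset.mem_powersetCard] at hTi hTj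
      exact hij (hTi.2 ▸ hTj.2)
  have hYcard : Y.card = X.card - 1 := Finset.card_erase_of_mem hzX
  calc G.card = Fintype.card {B // B ∈ G} := (Fintype.card_coe G).symm
    _ ≤ Module.finrank ℚ W := hcard1
    _ ≤ Φ.card := hcard2
    _ ≤ 𝒯.card := hcard3
    _ = ∑ i ∈ Finset.range (s' + 1), (X.card - 1).choose i := by rw [hcount, hYcard]

end Stmt3Aux

theorem stmt_3 (n s M : ℕ) (L : Finset ℕ) (hL : L.card = s) (hLne : L.Nonempty)
    (hpos : ∀ ℓ ∈ L, 0 < ℓ)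
    (F : Finset (Finset (Fin n)))
    (hSperner : ∀ A ∈ F, ∀ B ∈ F, A ≠ B → ¬ A ⊆ B)
    (hInt : ∀ A ∈ F, ∀ B ∈ F, A ≠ B → (A ∩ B).card ∈ L)
    (hM : ∀ A ∈ F, A.card ≤ M)
    (htriv : ∃ A : Finset (Fin n), A.card = L.min' hLne ∧ ∀ B ∈ F, A ⊆ B) :
    F.card ≤ ∑ i ∈ Finset.range (s + 1), (n - 2).choose i := by
  classical
  obtain ⟨A, hAcard, hAsub⟩ := htriv
  set ℓ₁ : ℕ := L.min' hLne with hℓ₁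
  have hℓ₁pos : 0 < ℓ₁ := hpos _ (L.min'_mem hLne)
  have hone : 1 ≤ ∑ i ∈ Finset.range (s + 1), (n - 2).choose i := by
    have h0 : (n-2).choose 0 ≤ ∑ i ∈ Finset.range (s + 1), (n - 2).choose i :=
      Finset.single_le_sum (fun i _ => Nat.zero_le _) (Finset.mem_range.2 (Nat.succ_pos s))
    simpa using h0
  by_cases hF1 : F.card ≤ 1
  · exact hF1.trans hone
  push_neg at hF1
  have hzA : ∃ z : Fin n, z ∉ A := by
    by_contra h
    push_neg at h
    have hAuniv : A = Finset.univ := Finset.eq_univ_iff_forall.2 h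
    have huniv : ∀ B ∈ F, B = Finset.univ := by
      intro B hB
      refine Finset.Subset.antisymm (Finset.subset_univ B) ?_
      rw [← hAuniv]; exact hAsub B hB
    have hsub : F ⊆ {Finset.univ} := by
      intro B hB; rw [Finset.mem_singleton]; exact huniv B hB
    have := (Finset.card_le_card hsub).trans_eq (Finset.card_singleton _)
    omega
  obtain ⟨z0, hz0⟩ := hzA
  set X : Finset (Fin n) := Finset.univ \ A with hX
  have hz0X : z0 ∈ X := Finset.mem_sdiff.2 ⟨Finset.mem_univ _, hz0⟩
  set L' : Finset ℕ := L.image (· - ℓ₁) with hL'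
  set G : Finset (Finset (Fin n)) := F.image (· \ A) with hG
  have hrecover : ∀ B ∈ F, (B \ A) ∪ A = B := fun B hB =>
    Finset.sdiff_union_of_subset (hAsub B hB)
  have hinj : Set.InjOn (· \ A) F := by
    intro B hB B' hB' h
    rw [← hrecover B hB, ← hrecover B' hB']
    simp only at h
    rw [h]
  have hGcard : G.card = F.card := Finset.card_image_of_injOn hinj
  have hGX : ∀ C ∈ G, C ⊆ X := by
    intro C hC
    rcases Finset.mem_image.1 hC with ⟨B, hB, rfl⟩
    exact Finset.sdiff_subset_sdiff (Finset.subset_univ B) (le_refl A)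
  have hanti : ∀ C ∈ G, ∀ C' ∈ G, C ≠ C' → ¬ C ⊆ C' := by
    rintro C hC C' hC' hne hsubC
    rcases Finset.mem_image.1 hC with ⟨B, hB, rfl⟩
    rcases Finset.mem_image.1 hC' with ⟨B', hB', rfl⟩
    have hBne : B ≠ B' := by rintro rfl; exact hne rfl
    refine hSperner B hB B' hB' hBne ?_
    calc B = (B \ A) ∪ A := (hrecover B hB).symm
      _ ⊆ (B' \ A) ∪ A := Finset.union_subset_union hsubC (le_refl A)
      _ = B' := hrecover B' hB'
  have hintG : ∀ C ∈ G, ∀ C' ∈ G, C ≠ C' → (C ∩ C').card ∈ L' := by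
    rintro C hC C' hC' hne
    rcases Finset.mem_image.1 hC with ⟨B, hB, rfl⟩
    rcases Finset.mem_image.1 hC' with ⟨B', hB', rfl⟩
    have hBne : B ≠ B' := by rintro rfl; exact hne rfl
    have hABB' : A ⊆ B ∩ B' := Finset.subset_inter (hAsub B hB) (hAsub B' hB')
    have hIeq : (B \ A) ∩ (B' \ A) = (B ∩ B') \ A := by
      ext x
      simp only [Finset.mem_inter, Finset.mem_sdiff]
      tauto
    rw [hIeq, Finset.card_sdiff_of_subset hABB', hAcard]
    exact Finset.mem_image_of_mem _ (hInt B hB B' hB' hBne)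
  have hkey := Stmt3Aux.key X z0 hz0X L' G hGX hanti hintG
  have hXcard : X.card = n - ℓ₁ := by
    rw [hX, Finset.card_sdiff_of_subset (Finset.subset_univ A), hAcard]
    simp
  have hYle : X.card - 1 ≤ n - 2 := by
    rw [hXcard]
    omega
  have hL'le : L'.card ≤ s := by
    rw [hL']
    exact (Finset.card_image_le).trans (le_of_eq hL)
  calc F.card = G.card := hGcard.symm
    _ ≤ ∑ i ∈ Finset.range (L'.card + 1), (X.card - 1).choose i := hkey
    _ ≤ ∑ i ∈ Finset.range (L'.card + 1), (n - 2).choose i :=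
        Finset.sum_le_sum (fun i _ => Nat.choose_le_choose i hYle)
    _ ≤ ∑ i ∈ Finset.range (s + 1), (n - 2).choose i :=
        Finset.sum_le_sum_of_subset (Finset.range_subset_range.2 (Nat.succ_le_succ hL'le))
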